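/- arXiv:1703.05112 — 3 statements merged into one kernel-verified Lean document; each statement's English description precedes it below -/
import Mathlib

section
/- Let P_G = −div(G(x)∇) be a uniformly elliptic divergence-form operator on L²(ℝ^d), and let b, w ∈ L^∞(ℝ^d) with b ≥ 0 and w ≥ w_min > 0. For z = τ + iμ ∈ ℂ with μ > 0, the operator T(z) = P_G − i z b − z² w is boundedly invertible on L²(ℝ^d), and there is a constant C (independent of z) such that ‖T(z)⁻¹‖_{L²→L²} ≤ C/(μ|z|). -/
/-- `S` is a bounded (everywhere-defined) inverse of the unbounded operator `T`
with domain `D`. -/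
def IsBoundedInverseOf {K : Type*} [NormedAddCommGroup K] [NormedSpace ℂ K]
    (D : Submodule ℂ K) (T : ↥D →ₗ[ℂ] K) (S : K →L[ℂ] K) : Prop :=
  (∀ y : K, S y ∈ D) ∧ (∀ (y : K) (h : S y ∈ D), T ⟨S y, h⟩ = y) ∧
    (∀ φ : ↥D, S (T φ) = (φ : K))

noncomputable section

namespace Stmt3Aux

open Complex

variable {K : Type*} [NormedAddCommGroup K] [InnerProductSpace ℂ K] [CompleteSpace K]

local notation "⟪" x ", " y "⟫" => @inner ℂ _ _ x y

/-- the operator `T(z)` for given bounded `B'`, `W'`. -/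
def opT (D : Submodule ℂ K) (P : ↥D →ₗ[ℂ] K) (B' W' : K →L[ℂ] K) (z : ℂ) : ↥D →ₗ[ℂ] K :=
  P - (Complex.I * z) • ((B' : K →ₗ[ℂ] K).comp D.subtype)
    - z ^ 2 • ((W' : K →ₗ[ℂ] K).comp D.subtype)

omit [CompleteSpace K] in
lemma opT_apply (D : Submodule ℂ K) (P : ↥D →ₗ[ℂ] K) (B' W' : K →L[ℂ] K) (z : ℂ) (φ : ↥D) :
    opT D P B' W' z φ = P φ - (Complex.I * z) • B' (φ : K) - z ^ 2 • W' (φ : K) := rfl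

omit [CompleteSpace K] in
lemma sa_real {A : K →L[ℂ] K} (hA : ∀ x y : K, ⟪A x, y⟫ = ⟪x, A y⟫) (x : K) :
    (⟪A x, x⟫).im = 0 := by
  have h1 : ⟪A x, x⟫ = (starRingEnd ℂ) ⟪A x, x⟫ := by
    rw [inner_conj_symm]; exact hA x x
  have := congrArg Complex.im h1
  simpa using by linarith [this, Complex.conj_im (⟪A x, x⟫)]

omit [CompleteSpace K] in
lemma coercive (D : Submodule ℂ K) (P : ↥D →ₗ[ℂ] K)
    (hsymm : ∀ φ ψ : ↥D, ⟪P φ, (ψ:K)⟫ = ⟪(φ:K), P ψ⟫)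
    (hnonneg : ∀ φ : ↥D, 0 ≤ (⟪P φ, (φ:K)⟫).re)
    (B' W' : K →L[ℂ] K)
    (hB'sa : ∀ x y : K, ⟪B' x, y⟫ = ⟪x, B' y⟫) (hB'pos : ∀ x : K, 0 ≤ (⟪B' x, x⟫).re)
    (hW'sa : ∀ x y : K, ⟪W' x, y⟫ = ⟪x, W' y⟫)
    (wmin : ℝ) (hwmin : 0 < wmin) (hW'pos : ∀ x : K, wmin * ‖x‖^2 ≤ (⟪W' x, x⟫).re)
    (z : ℂ) (hz : 0 < z.im) (φ : ↥D) :
    wmin * z.im * ‖z‖ * ‖(φ:K)‖ ≤ ‖opT D P B' W' z φ‖ := by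
  set x : K := (φ : K) with hx
  set a : ℂ := ⟪P φ, x⟫ with ha
  set b : ℂ := ⟪B' x, x⟫ with hb
  set w : ℂ := ⟪W' x, x⟫ with hw
  have haim : a.im = 0 := by
    have h1 : a = (starRingEnd ℂ) a := by rw [inner_conj_symm]; exact hsymm φ φ
    have := congrArg Complex.im h1
    simpa using by linarith [this, Complex.conj_im a]
  have hbim : b.im = 0 := sa_real hB'sa x
  have hwim : w.im = 0 := sa_real hW'sa x
  have hQ : ⟪opT D P B' W' z φ, x⟫
      = a - (starRingEnd ℂ) (Complex.I * z) * b - (starRingEnd ℂ) (z^2) * w := by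
    rw [opT_apply]
    rw [inner_sub_left, inner_sub_left, inner_smul_left, inner_smul_left]
  set Q : ℂ := ⟪opT D P B' W' z φ, x⟫ with hQdef
  have him : (z * Q).im = z.im * a.re + (z.re^2 + z.im^2) * b.re
      + z.im * (z.re^2 + z.im^2) * w.re := by
    rw [hQ]
    simp [Complex.mul_im, Complex.mul_re, Complex.conj_re, Complex.conj_im, haim, hbim, hwim,
      Complex.sub_im, Complex.sub_re, Complex.I_re, Complex.I_im, pow_two]
    ring
  have hab2 : (‖z‖)^2 = z.re^2 + z.im^2 := by
    rw [Complex.sq_norm, Complex.normSq_apply]; ring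
  have hlow : wmin * z.im * (‖z‖)^2 * ‖x‖^2 ≤ (z * Q).im := by
    rw [him, hab2]
    have h1 : 0 ≤ z.im * a.re := mul_nonneg hz.le (hnonneg φ)
    have h2 : 0 ≤ (z.re^2 + z.im^2) * b.re := mul_nonneg (by positivity) (hB'pos x)
    have h3 : z.im * (z.re^2 + z.im^2) * (wmin * ‖x‖^2) ≤ z.im * (z.re^2 + z.im^2) * w.re := by
      apply mul_le_mul_of_nonneg_left (hW'pos x) (by positivity)
    nlinarith [h1, h2, h3]
  have hup : (z * Q).im ≤ ‖z‖ * (‖opT D P B' W' z φ‖ * ‖x‖) := by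
    calc (z * Q).im ≤ ‖z * Q‖ := Complex.im_le_norm _
    _ = ‖z‖ * ‖Q‖ := by rw [norm_mul]
    _ ≤ ‖z‖ * (‖opT D P B' W' z φ‖ * ‖x‖) := by
        apply mul_le_mul_of_nonneg_left _ (norm_nonneg z)
        simpa [hQdef] using norm_inner_le_norm (𝕜 := ℂ) (opT D P B' W' z φ) x
  have habs : 0 < ‖z‖ := by
    apply norm_pos_iff.mpr; intro h; rw [h] at hz; simp at hz
  rcases eq_or_lt_of_le (norm_nonneg x) with h0 | h0
  · rw [← h0]; simp
  · have := le_trans hlow hup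
    have h2 : wmin * z.im * ‖z‖ * ‖x‖ * (‖z‖ * ‖x‖)
        ≤ ‖opT D P B' W' z φ‖ * (‖z‖ * ‖x‖) := by nlinarith
    exact le_of_mul_le_mul_right h2 (by positivity)

omit [CompleteSpace K] in
lemma exists_inverse (D : Submodule ℂ K) (A : ↥D →ₗ[ℂ] K) (c : ℝ) (hc : 0 < c)
    (hcoerc : ∀ φ : ↥D, c * ‖(φ:K)‖ ≤ ‖A φ‖)
    (hsurj : Function.Surjective A) :
    ∃ S : K →L[ℂ] K, IsBoundedInverseOf D A S ∧ ‖S‖ ≤ 1 / c := by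
  have hinj : Function.Injective A := by
    intro φ ψ h
    have h0 : A (φ - ψ) = 0 := by rw [map_sub, h, sub_self]
    have := hcoerc (φ - ψ)
    rw [h0, norm_zero] at this
    have hn : ‖((φ - ψ : ↥D) : K)‖ = 0 := le_antisymm (by nlinarith) (norm_nonneg _)
    have : ((φ - ψ : ↥D) : K) = 0 := norm_eq_zero.mp hn
    have : (φ : K) = (ψ : K) := by
      have := sub_eq_zero.mp this; simpa using this
    exact Subtype.ext this
  set e := LinearEquiv.ofBijective A ⟨hinj, hsurj⟩ with he
  have hAe : ∀ y : K, A (e.symm y) = y := fun y => e.apply_symm_apply y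
  set Slin : K →ₗ[ℂ] K := D.subtype.comp e.symm.toLinearMap with hS
  have hbound : ∀ y : K, ‖Slin y‖ ≤ (1 / c) * ‖y‖ := by
    intro y
    have h1 : c * ‖((e.symm y : ↥D) : K)‖ ≤ ‖y‖ := by
      have := hcoerc (e.symm y); rwa [hAe y] at this
    have h2 : ‖Slin y‖ = ‖((e.symm y : ↥D) : K)‖ := rfl
    rw [h2, div_mul_eq_mul_div, le_div_iff₀ hc]
    nlinarith
  refine ⟨Slin.mkContinuous (1/c) hbound, ⟨?_, ?_, ?_⟩,
    Slin.mkContinuous_norm_le (by positivity) hbound⟩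
  · intro y; exact (e.symm y : ↥D).2
  · intro y h
    have hEq : (⟨Slin.mkContinuous (1/c) hbound y, h⟩ : ↥D) = e.symm y := Subtype.ext rfl
    rw [hEq]; exact hAe y
  · intro φ
    rw [LinearMap.mkContinuous_apply]
    show ((e.symm (A φ) : ↥D) : K) = (φ : K)
    congr 1
    exact e.symm_apply_apply φ

lemma surj_perturb (D : Submodule ℂ K) (A : ↥D →ₗ[ℂ] K) (c : ℝ) (hc : 0 < c)
    (hcoerc : ∀ φ : ↥D, c * ‖(φ:K)‖ ≤ ‖A φ‖) (hsurj : Function.Surjective A)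
    (R : K →L[ℂ] K) (hR : ‖R‖ < c) :
    Function.Surjective (A + (R : K →ₗ[ℂ] K).comp D.subtype) := by
  obtain ⟨S, ⟨hmem, hright, hleft⟩, hSnorm⟩ := exists_inverse D A c hc hcoerc hsurj
  intro y
  set t : K →L[ℂ] K := -(S.comp R) with ht
  have htn : ‖t‖ < 1 := by
    have h1 : ‖S.comp R‖ ≤ ‖S‖ * ‖R‖ := S.opNorm_comp_le R
    have h2 : ‖S‖ * ‖R‖ < 1 := by
      rcases le_or_gt ‖R‖ 0 with h | h
      · have : ‖R‖ = 0 := le_antisymm h (norm_nonneg _)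
        nlinarith [norm_nonneg S]
      · calc ‖S‖ * ‖R‖ ≤ (1/c) * ‖R‖ := by nlinarith
          _ < 1 := by rw [div_mul_eq_mul_div, one_mul, div_lt_one hc]; exact hR
    calc ‖t‖ = ‖S.comp R‖ := norm_neg _
      _ < 1 := lt_of_le_of_lt h1 h2
  set u : (K →L[ℂ] K)ˣ := Units.oneSub t htn with hu
  set x : K := (↑u⁻¹ : K →L[ℂ] K) (S y) with hxdef
  have hux : ((u : K →L[ℂ] K) * (↑u⁻¹ : K →L[ℂ] K)) (S y) = S y := by
    rw [u.mul_inv]; rfl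
  have hx : x + S (R x) = S y := by
    have h1 : x - t x = S y := by
      have h0 : (u : K →L[ℂ] K) x = S y := hux
      rwa [show (u : K →L[ℂ] K) = 1 - t from rfl, ContinuousLinearMap.sub_apply,
        ContinuousLinearMap.one_apply] at h0
    simpa [ht, ContinuousLinearMap.neg_apply, ContinuousLinearMap.comp_apply,
      sub_neg_eq_add] using h1
  have hxe : x = S (y - R x) := by rw [map_sub]; exact eq_sub_of_add_eq hx
  have hmemx : x ∈ D := hxe ▸ hmem (y - R x)
  refine ⟨⟨x, hmemx⟩, ?_⟩
  have hEq : (⟨x, hmemx⟩ : ↥D) = ⟨S (y - R x), hmem _⟩ := Subtype.ext hxe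
  rw [LinearMap.add_apply, LinearMap.comp_apply, hEq]
  rw [hright (y - R x) (hmem _)]
  simp [← hxe]


lemma surj_main (D : Submodule ℂ K) (P : ↥D →ₗ[ℂ] K)
    (hsymm : ∀ φ ψ : ↥D, ⟪P φ, (ψ:K)⟫ = ⟪(φ:K), P ψ⟫)
    (hnonneg : ∀ φ : ↥D, 0 ≤ (⟪P φ, (φ:K)⟫).re)
    (hsa : ∀ z : ℂ, z.im ≠ 0 → ∀ y : K, ∃ φ : ↥D, P φ - z • (φ : K) = y)
    (B W : K →L[ℂ] K)
    (hBsa : ∀ x y : K, ⟪B x, y⟫ = ⟪x, B y⟫) (hBpos : ∀ x : K, 0 ≤ (⟪B x, x⟫).re)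
    (hWsa : ∀ x y : K, ⟪W x, y⟫ = ⟪x, W y⟫)
    (wmin : ℝ) (hwmin : 0 < wmin) (hWpos : ∀ x : K, wmin * ‖x‖^2 ≤ (⟪W x, x⟫).re)
    (z : ℂ) (hz : 0 < z.im) :
    Function.Surjective (opT D P B W z) := by
  classical
  set ζ : ℝ → ℂ := fun s => (s:ℂ)*z + (1-(s:ℂ))*(1+Complex.I) with hζ
  set f : ℝ → (K →L[ℂ] K) := fun s =>
    (Complex.I * ζ s * (s:ℂ)) • B + (((ζ s)^2 * (s:ℂ)) • W
      + ((ζ s)^2 * (((1-s)*wmin : ℝ):ℂ)) • (1 : K →L[ℂ] K)) with hf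
  set A : ℝ → (↥D →ₗ[ℂ] K) := fun s =>
    P - ((f s : K →L[ℂ] K) : K →ₗ[ℂ] K).comp D.subtype with hA
  -- imaginary part of the path
  have hζim : ∀ s : ℝ, (ζ s).im = s * z.im + (1 - s) := by
    intro s
    simp [hζ, Complex.add_im, Complex.mul_im, Complex.sub_re, Complex.sub_im,
      Complex.one_re, Complex.one_im, Complex.ofReal_re, Complex.ofReal_im,
      Complex.add_re, Complex.I_re, Complex.I_im]
  set ν : ℝ := min z.im 1 with hν
  have hν0 : 0 < ν := lt_min hz one_pos
  have hνle : ∀ s : ℝ, s ∈ Set.Icc (0:ℝ) 1 → ν ≤ (ζ s).im := by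
    intro s hs
    rw [hζim]
    have h1 : ν ≤ z.im := min_le_left _ _
    have h2 : ν ≤ 1 := min_le_right _ _
    nlinarith [hs.1, hs.2]
  set c : ℝ := wmin * (ν * ν) with hc
  have hc0 : 0 < c := by positivity
  -- A s equals opT with the perturbed B, W
  have hAeq : ∀ s : ℝ, A s = opT D P ((s:ℂ) • B)
      ((s:ℂ) • W + ((((1-s)*wmin : ℝ):ℂ)) • (1 : K →L[ℂ] K)) (ζ s) := by
    intro s
    ext φ
    simp only [hA, hf, opT, LinearMap.sub_apply, LinearMap.smul_apply, LinearMap.comp_apply,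
      LinearMap.coe_comp, Submodule.coe_subtype, Function.comp_apply,
      ContinuousLinearMap.coe_coe, ContinuousLinearMap.add_apply,
      ContinuousLinearMap.smul_apply, ContinuousLinearMap.one_apply]
    module
  -- coercivity along the path
  have hcoercA : ∀ s : ℝ, s ∈ Set.Icc (0:ℝ) 1 → ∀ φ : ↥D, c * ‖(φ:K)‖ ≤ ‖A s φ‖ := by
    intro s hs φ
    have hzsim : 0 < (ζ s).im := lt_of_lt_of_le hν0 (hνle s hs)
    have hco := coercive D P hsymm hnonneg ((s:ℂ) • B)
      ((s:ℂ) • W + ((((1-s)*wmin : ℝ):ℂ)) • (1 : K →L[ℂ] K))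
      (by
        intro x y
        simp only [ContinuousLinearMap.smul_apply]
        rw [inner_smul_left, inner_smul_right, Complex.conj_ofReal, hBsa])
      (by
        intro x
        simp only [ContinuousLinearMap.smul_apply]
        rw [inner_smul_left, Complex.conj_ofReal]
        simp only [Complex.mul_re, Complex.ofReal_re, Complex.ofReal_im, zero_mul, sub_zero]
        exact mul_nonneg hs.1 (hBpos x))
      (by
        intro x y
        simp only [ContinuousLinearMap.add_apply, ContinuousLinearMap.smul_apply,
          ContinuousLinearMap.one_apply]
        rw [inner_add_left, inner_add_right, inner_smul_left, inner_smul_right,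
          inner_smul_left, inner_smul_right, Complex.conj_ofReal, Complex.conj_ofReal, hWsa])
      wmin hwmin
      (by
        intro x
        simp only [ContinuousLinearMap.add_apply, ContinuousLinearMap.smul_apply,
          ContinuousLinearMap.one_apply]
        rw [inner_add_left, inner_smul_left, inner_smul_left, Complex.conj_ofReal,
          Complex.conj_ofReal]
        have hself : (⟪x, x⟫).re = ‖x‖^2 := by
          have := inner_self_eq_norm_sq (𝕜 := ℂ) x
          simpa using this
        simp only [Complex.add_re, Complex.mul_re, Complex.ofReal_re, Complex.ofReal_im,
          zero_mul, sub_zero, hself]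
        have h1 : s * (wmin * ‖x‖^2) ≤ s * (⟪W x, x⟫).re :=
          mul_le_mul_of_nonneg_left (hWpos x) hs.1
        nlinarith [hs.1, hs.2, norm_nonneg x, sq_nonneg ‖x‖, h1])
      (ζ s) hzsim φ
    rw [hAeq s]
    refine le_trans ?_ hco
    have habsim : (ζ s).im ≤ ‖ζ s‖ :=
      le_trans (le_abs_self _) (Complex.abs_im_le_norm _)
    have h1 : ν ≤ (ζ s).im := hνle s hs
    have h2 : ν ≤ ‖ζ s‖ := le_trans h1 habsim
    have := norm_nonneg ((φ:K))
    nlinarith [mul_le_mul_of_nonneg_right (mul_le_mul_of_nonneg_left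
      (mul_le_mul h1 h2 hν0.le hzsim.le) hwmin.le) (norm_nonneg ((φ:K)))]
  -- uniform continuity of the coefficients
  have hcont : Continuous f := by
    rw [hf, hζ]
    fun_prop
  have hucont := (isCompact_Icc (a := (0:ℝ)) (b := 1)).uniformContinuousOn_of_continuous
    hcont.continuousOn
  rw [Metric.uniformContinuousOn_iff] at hucont
  obtain ⟨δ, hδ0, hδ⟩ := hucont c hc0
  obtain ⟨n, hn⟩ := exists_nat_one_div_lt hδ0
  set N : ℕ := n + 1 with hN
  have hN0 : (0:ℝ) < N := by positivity
  have hNδ : (1:ℝ)/N < δ := by exact_mod_cast hn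
  -- induction along the path
  have key : ∀ k : ℕ, k ≤ N → Function.Surjective (A ((k:ℝ) / N)) := by
    intro k
    induction k with
    | zero =>
      intro _
      intro y
      have hsq : ((1:ℂ)+Complex.I)^2 = 2*Complex.I := by
        have h := Complex.I_sq
        ring_nf
        rw [Complex.I_sq]
        ring
      have him : ((1+Complex.I)^2 * (wmin:ℂ)).im = 2 * wmin := by
        rw [hsq]
        simp [Complex.mul_im, Complex.mul_re]
      obtain ⟨φ, hφ⟩ := hsa ((1+Complex.I)^2 * (wmin:ℂ))
        (by rw [him]; exact ne_of_gt (by linarith)) y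
      refine ⟨φ, ?_⟩
      have h0 : ((0:ℕ):ℝ)/N = 0 := by simp
      rw [h0]
      have hζ0 : ζ 0 = 1 + Complex.I := by simp [hζ]
      simp only [hA, hf, LinearMap.sub_apply, LinearMap.coe_comp, Submodule.coe_subtype,
        Function.comp_apply, ContinuousLinearMap.coe_coe, ContinuousLinearMap.add_apply,
        ContinuousLinearMap.smul_apply, ContinuousLinearMap.one_apply, hζ0]
      rw [← hφ]
      push_cast
      module
    | succ k ih =>
      intro hk
      have hkN : k ≤ N := Nat.le_of_succ_le hk
      have hsurjk := ih hkN
      set s : ℝ := (k:ℝ)/N with hs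
      set t : ℝ := ((k+1:ℕ):ℝ)/N with hts
      have hsmem : s ∈ Set.Icc (0:ℝ) 1 := by
        constructor
        · positivity
        · rw [hs, div_le_one hN0]; exact_mod_cast hkN
      have htmem : t ∈ Set.Icc (0:ℝ) 1 := by
        constructor
        · positivity
        · rw [hts, div_le_one hN0]; exact_mod_cast hk
      have hdist : dist s t < δ := by
        rw [Real.dist_eq, hs, hts]
        have : ((k:ℝ))/N - ((k+1:ℕ):ℝ)/N = -(1/N) := by
          push_cast; field_simp; ring
        rw [this, abs_neg, abs_of_pos (by positivity)]
        exact hNδ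
      have hR : ‖f s - f t‖ < c := by
        have := hδ s hsmem t htmem hdist
        rwa [dist_eq_norm] at this
      have hstep := surj_perturb D (A s) c hc0 (hcoercA s hsmem) hsurjk (f s - f t) hR
      have hAt : A t = A s + ((f s - f t : K →L[ℂ] K) : K →ₗ[ℂ] K).comp D.subtype := by
        ext φ
        simp only [hA, LinearMap.sub_apply, LinearMap.add_apply, LinearMap.coe_comp,
          Submodule.coe_subtype, Function.comp_apply, ContinuousLinearMap.coe_coe,
          ContinuousLinearMap.sub_apply]
        abel
      rw [hAt]
      exact hstep
  have hfin := key N (le_refl N)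
  have hone : ((N:ℝ))/N = 1 := div_self (ne_of_gt hN0)
  rw [hone] at hfin
  have hA1 : A 1 = opT D P B W z := by
    have hζ1 : ζ 1 = z := by simp [hζ]
    ext φ
    simp only [hA, hf, opT, LinearMap.sub_apply, LinearMap.coe_comp, Submodule.coe_subtype,
      Function.comp_apply, ContinuousLinearMap.coe_coe, ContinuousLinearMap.add_apply,
      ContinuousLinearMap.smul_apply, ContinuousLinearMap.one_apply, LinearMap.smul_apply,
      hζ1]
    push_cast
    module
  rwa [hA1] at hfin

end Stmt3Aux

end

/-- Abstract version of the operator `P_G = -div(G∇)`: a self-adjoint nonnegative operator `P`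
on the Hilbert space `K` (playing the role of `L²(ℝ^d)`) with domain `D` (playing `H²`),
together with bounded self-adjoint multiplication operators `B` (by `b ≥ 0`) and `W`
(by `w ≥ w_min > 0`).  For `z = τ + iμ` with `μ > 0`, the operator
`T(z) = P - izB - z²W` is boundedly invertible with `‖T(z)⁻¹‖ ≤ C/(μ|z|)`,
with `C` independent of `z`. -/
theorem stmt3 {K : Type*} [NormedAddCommGroup K] [InnerProductSpace ℂ K] [CompleteSpace K]
    (D : Submodule ℂ K) (P : ↥D →ₗ[ℂ] K)
    (hsymm : ∀ φ ψ : ↥D, (inner ℂ (P φ) (ψ : K) : ℂ) = inner ℂ (φ : K) (P ψ))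
    (hnonneg : ∀ φ : ↥D, 0 ≤ (inner ℂ (P φ) (φ : K) : ℂ).re)
    (hsa : ∀ z : ℂ, z.im ≠ 0 → ∀ y : K, ∃ φ : ↥D, P φ - z • (φ : K) = y)
    (B W : K →L[ℂ] K)
    (hBsa : ∀ x y : K, (inner ℂ (B x) y : ℂ) = inner ℂ x (B y))
    (hBpos : ∀ x : K, 0 ≤ (inner ℂ (B x) x : ℂ).re)
    (hWsa : ∀ x y : K, (inner ℂ (W x) y : ℂ) = inner ℂ x (W y))
    (wmin : ℝ) (hwmin : 0 < wmin)
    (hWpos : ∀ x : K, wmin * ‖x‖ ^ 2 ≤ (inner ℂ (W x) x : ℂ).re) :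
    ∃ C : ℝ, 0 ≤ C ∧ ∀ z : ℂ, 0 < z.im →
      ∃ S : K →L[ℂ] K,
        IsBoundedInverseOf D
          (P - (Complex.I * z) • ((B : K →ₗ[ℂ] K).comp D.subtype)
             - z ^ 2 • ((W : K →ₗ[ℂ] K).comp D.subtype)) S ∧
        ‖S‖ ≤ C / (z.im * ‖z‖) := by
  refine ⟨wmin⁻¹, by positivity, ?_⟩
  intro z hz
  have habs : 0 < ‖z‖ := by
    apply norm_pos_iff.mpr; intro h; rw [h] at hz; simp at hz
  have hc : 0 < wmin * z.im * ‖z‖ := by positivity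
  have hsurj := Stmt3Aux.surj_main D P hsymm hnonneg hsa B W hBsa hBpos hWsa
    wmin hwmin hWpos z hz
  have hcoerc : ∀ φ : ↥D, wmin * z.im * ‖z‖ * ‖(φ:K)‖
      ≤ ‖Stmt3Aux.opT D P B W z φ‖ :=
    fun φ => Stmt3Aux.coercive D P hsymm hnonneg B W hBsa hBpos hWsa wmin hwmin hWpos z hz φ
  obtain ⟨S, hS, hSn⟩ := Stmt3Aux.exists_inverse D (Stmt3Aux.opT D P B W z)
    (wmin * z.im * ‖z‖) hc hcoerc hsurj
  refine ⟨S, hS, ?_⟩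
  calc ‖S‖ ≤ 1 / (wmin * z.im * ‖z‖) := hSn
    _ = wmin⁻¹ / (z.im * ‖z‖) := by
        field_simp
end

section
/- (No Jordan block at zero) With A⁰ as above on the torus, ker((A⁰)²) = ker(A⁰), i.e., 0 is an algebraically simple eigenvalue. Concretely: if (u,v) ∈ H²_# × H¹_# satisfies A⁰(u,v) = (α, 0) for a constant α ∈ ℂ, then integrating P_p u over the unit cell gives 0 = iα ∫_𝕋 w_p a_p dx, and since ∫_𝕋 w_p a_p > 0 it follows that α = 0 and (u,v) ∈ ker(A⁰). -/
open MeasureTheory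

/-- No Jordan block at zero for the periodic damped-wave generator
`A⁰ = [[0, w_p⁻¹],[P_p, -i a_p]]`: if `(u,v)` (periodic, with the indicated regularity)
satisfies `A⁰(u,v) = (α, 0)` for a constant `α ∈ ℂ`, then `α = 0` and `(u,v) ∈ ker A⁰`
(indeed `v = 0` and `div(G_p∇u) = 0`).  The point is that integrating `P_p u` over the
unit cell gives `0 = iα ∫_𝕋 w_p a_p`, and `∫_𝕋 w_p a_p > 0`. -/
theorem stmt13 (d : ℕ)
    (Gp : (Fin d → ℝ) → Fin d → Fin d → ℝ) (wp ap : (Fin d → ℝ) → ℝ)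
    (Gmin wmin : ℝ) (hGmin : 0 < Gmin) (hwmin : 0 < wmin)
    (hGper : ∀ (x : Fin d → ℝ) (n : Fin d → ℤ), Gp (x + fun i => (n i : ℝ)) = Gp x)
    (hwper : ∀ (x : Fin d → ℝ) (n : Fin d → ℤ), wp (x + fun i => (n i : ℝ)) = wp x)
    (haper : ∀ (x : Fin d → ℝ) (n : Fin d → ℤ), ap (x + fun i => (n i : ℝ)) = ap x)
    (hGsym : ∀ x i j, Gp x i j = Gp x j i)
    (hGell : ∀ (x ξ : Fin d → ℝ),
      Gmin * (∑ i, ξ i ^ 2) ≤ ∑ i, ∑ j, Gp x i j * ξ i * ξ j)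
    (hGsmooth : ContDiff ℝ 1 Gp)
    (hw : ∀ x, wmin ≤ wp x) (hwC : Continuous wp)
    (ha0 : ∀ x, 0 ≤ ap x) (haC : Continuous ap) (hane : ∃ x, ap x ≠ 0)
    (u v : (Fin d → ℝ) → ℂ)
    (huper : ∀ (x : Fin d → ℝ) (n : Fin d → ℤ), u (x + fun i => (n i : ℝ)) = u x)
    (hvper : ∀ (x : Fin d → ℝ) (n : Fin d → ℤ), v (x + fun i => (n i : ℝ)) = v x)
    (hu : ContDiff ℝ 2 u) (hv : Continuous v)
    (α : ℂ)
    (h1 : ∀ x, ((wp x : ℝ) : ℂ)⁻¹ * v x = α)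
    (h2 : ∀ x, -(∑ j, fderiv ℝ
          (fun y => ∑ k, ((Gp y j k : ℝ) : ℂ) * fderiv ℝ u y (Pi.single k 1))
          x (Pi.single j 1))
        - Complex.I * ((ap x : ℝ) : ℂ) * v x = 0) :
    α = 0 ∧ (∀ x, v x = 0) ∧
      (∀ x, (∑ j, fderiv ℝ
          (fun y => ∑ k, ((Gp y j k : ℝ) : ℂ) * fderiv ℝ u y (Pi.single k 1))
          x (Pi.single j 1)) = 0) := by
  -- positivity of wp, hence v = wp * α
  have hwpos : ∀ x, (0:ℝ) < wp x := fun x => lt_of_lt_of_le hwmin (hw x)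
  have hwne : ∀ x, ((wp x : ℝ) : ℂ) ≠ 0 := by
    intro x
    exact_mod_cast (hwpos x).ne'
  have hvx : ∀ x, v x = ((wp x : ℝ) : ℂ) * α := by
    intro x
    have h := h1 x
    rw [← h, ← mul_assoc, mul_inv_cancel₀ (hwne x), one_mul]
  -- the divergence identity, with v substituted
  have hdiv : ∀ x, (∑ j, fderiv ℝ
          (fun y => ∑ k, ((Gp y j k : ℝ) : ℂ) * fderiv ℝ u y (Pi.single k 1))
          x (Pi.single j 1))
        = (-(Complex.I * α)) * ((ap x * wp x : ℝ) : ℂ) := by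
    intro x
    have h := h2 x
    rw [hvx x] at h
    push_cast
    push_cast at h
    linear_combination -h
  -- the key step: α = 0
  have hα : α = 0 := by
    rcases d with _ | n
    · -- dimension 0: everything is a single point
      obtain ⟨x₀, hx₀⟩ := hane
      have h := h2 x₀
      simp only [Finset.univ_eq_empty, Finset.sum_empty, neg_zero, zero_sub, neg_eq_zero] at h
      have hIne : Complex.I ≠ 0 := Complex.I_ne_zero
      have hapne : ((ap x₀ : ℝ) : ℂ) ≠ 0 := by exact_mod_cast hx₀
      have hv0 : v x₀ = 0 := by
        rcases mul_eq_zero.1 h with h' | h'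
        · rcases mul_eq_zero.1 h' with h'' | h''
          · exact absurd h'' hIne
          · exact absurd h'' hapne
        · exact h'
      have := h1 x₀
      rw [hv0, mul_zero] at this
      exact this.symm
    · -- dimension ≥ 1: integrate the divergence over the unit cell
      set β : ℂ := -(Complex.I * α) with hβ
      set F : Fin (n+1) → (Fin (n+1) → ℝ) → ℂ :=
        fun j y => ∑ k, ((Gp y j k : ℝ) : ℂ) * fderiv ℝ u y (Pi.single k 1) with hFdef
      -- regularity of F
      have hud : Differentiable ℝ u := hu.differentiable (by norm_num)
      have hFsm : ∀ j, ContDiff ℝ 1 (F j) := by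
        intro j
        apply ContDiff.sum
        intro k _
        have hG1 : ContDiff ℝ 1 (fun y => Gp y j k) :=
          (contDiff_pi.1 ((contDiff_pi.1 hGsmooth) j)) k
        have hG2 : ContDiff ℝ 1 (fun y => ((Gp y j k : ℝ) : ℂ)) :=
          Complex.ofRealCLM.contDiff.comp hG1
        have hdu : ContDiff ℝ 1 (fderiv ℝ u) := hu.fderiv_right (by norm_num)
        exact hG2.mul (hdu.clm_apply contDiff_const)
      -- periodicity of fderiv u
      have hfderper : ∀ (x : Fin (n+1) → ℝ) (m : Fin (n+1) → ℤ),
          fderiv ℝ u (x + fun i => (m i : ℝ)) = fderiv ℝ u x := by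
        intro x m
        set c : Fin (n+1) → ℝ := fun i => (m i : ℝ) with hc
        have h1' : HasFDerivAt (fun y => u (y + c))
            ((fderiv ℝ u (x + c)).comp (ContinuousLinearMap.id ℝ _)) x := by
          exact (hud (x + c)).hasFDerivAt.comp x ((hasFDerivAt_id x).add_const c)
        have h2' : (fun y : Fin (n+1) → ℝ => u (y + c)) = u := funext fun y => huper y m
        rw [h2', ContinuousLinearMap.comp_id] at h1'
        exact (h1'.fderiv).symm
      -- periodicity of F
      have hFper : ∀ (j : Fin (n+1)) (x : Fin (n+1) → ℝ) (m : Fin (n+1) → ℤ),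
          F j (x + fun i => (m i : ℝ)) = F j x := by
        intro j x m
        simp only [hFdef]
        refine Finset.sum_congr rfl fun k _ => ?_
        rw [hGper x m, hfderper x m]
      -- apply the divergence theorem on the unit box
      set a : Fin (n+1) → ℝ := fun _ => 0 with ha
      set b : Fin (n+1) → ℝ := fun _ => 1 with hb
      have hab : a ≤ b := fun i => by norm_num [ha, hb]
      have key := integral_divergence_of_hasFDerivAt_off_countable' a b hab F
        (fun j x => fderiv ℝ (F j) x) ∅ Set.countable_empty
        (fun j => ((hFsm j).continuous).continuousOn)
        (fun x _ j => ((hFsm j).differentiable one_ne_zero x).hasFDerivAt)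
        (by
          have : (fun x => ∑ i, fderiv ℝ (F i) x (Pi.single i 1))
              = fun x => β * ((ap x * wp x : ℝ) : ℂ) := funext fun x => hdiv x
          rw [this]
          exact (ContinuousOn.integrableOn_compact isCompact_Icc
            ((continuous_const.mul (Complex.continuous_ofReal.comp (haC.mul hwC))).continuousOn)))
      -- the boundary terms vanish by periodicity
      have hbd : ∀ i : Fin (n+1),
          ((∫ x in Set.Icc (a ∘ i.succAbove) (b ∘ i.succAbove), F i (i.insertNth (b i) x)) -
            ∫ x in Set.Icc (a ∘ i.succAbove) (b ∘ i.succAbove), F i (i.insertNth (a i) x)) = 0 := by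
        intro i
        have hpt : ∀ x : Fin n → ℝ, F i (i.insertNth (b i) x) = F i (i.insertNth (a i) x) := by
          intro x
          have harg : i.insertNth (b i) x
              = i.insertNth (a i) x + fun j => ((Pi.single i 1 : Fin (n+1) → ℤ) j : ℝ) := by
            funext j
            rcases eq_or_ne j i with rfl | hne
            · simp [ha, hb, Pi.single_eq_same]
            · obtain ⟨k, rfl⟩ := Fin.exists_succAbove_eq hne
              simp [Pi.single_eq_of_ne (i.succAbove_ne k)]
          rw [harg, hFper i _ (Pi.single i 1)]
        rw [sub_eq_zero]
        exact setIntegral_congr_fun measurableSet_Icc (fun x _ => hpt x)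
      rw [Finset.sum_eq_zero (fun i _ => hbd i)] at key
      -- compute the LHS of key
      have hLHS : ∫ x in Set.Icc a b, ∑ i, fderiv ℝ (F i) x (Pi.single i 1)
          = β * ((∫ x in Set.Icc a b, ap x * wp x : ℝ) : ℂ) := by
        have : (fun x : Fin (n+1) → ℝ => ∑ i, fderiv ℝ (F i) x (Pi.single i 1))
            = fun x => β * ((ap x * wp x : ℝ) : ℂ) := funext fun x => hdiv x
        rw [this, integral_const_mul]
        congr 1
        exact integral_ofReal
      rw [hLHS] at key
      -- positivity of ∫ ap * wp
      have hpos : 0 < ∫ x in Set.Icc a b, ap x * wp x := by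
        have hnn : 0 ≤ᶠ[ae (volume.restrict (Set.Icc a b))] fun x => ap x * wp x :=
          Filter.Eventually.of_forall fun x => mul_nonneg (ha0 x) (hwpos x).le
        have hint : IntegrableOn (fun x => ap x * wp x) (Set.Icc a b) volume :=
          ContinuousOn.integrableOn_compact isCompact_Icc (haC.mul hwC).continuousOn
        rw [setIntegral_pos_iff_support_of_nonneg_ae hnn hint]
        -- find a point in [0,1)^d where ap ≠ 0
        obtain ⟨x₀, hx₀⟩ := hane
        set x₁ : Fin (n+1) → ℝ := fun i => Int.fract (x₀ i) with hx₁def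
        have hx₁ : ap x₁ ≠ 0 := by
          have : x₁ = x₀ + fun i => ((-⌊x₀ i⌋ : ℤ) : ℝ) := by
            funext i; simp [hx₁def, Int.fract, sub_eq_add_neg]
          rw [this, haper]
          exact hx₀
        have hx₁mem : ∀ i, x₁ i ∈ Set.Icc (0:ℝ) 1 :=
          fun i => ⟨Int.fract_nonneg _, (Int.fract_lt_one _).le⟩
        -- the support is open and meets the open box
        set f : (Fin (n+1) → ℝ) → ℝ := fun x => ap x * wp x with hfdef
        have hfx₁ : f x₁ ≠ 0 := mul_ne_zero hx₁ (hwpos x₁).ne'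
        have hU : IsOpen (Function.support f) := by
          have : Function.support f = f ⁻¹' {0}ᶜ := by
            ext x; simp [Function.mem_support]
          rw [this]
          exact (isOpen_compl_singleton).preimage (haC.mul hwC)
        have hx₁cl : x₁ ∈ closure (Set.univ.pi fun _ : Fin (n+1) => Set.Ioo (0:ℝ) 1) := by
          rw [closure_pi_set]
          intro i _
          simpa [closure_Ioo (by norm_num : (0:ℝ) ≠ 1)] using hx₁mem i
        have hW : (Function.support f ∩ Set.univ.pi fun _ : Fin (n+1) => Set.Ioo (0:ℝ) 1).Nonempty := by
          have := mem_closure_iff.1 hx₁cl (Function.support f) hU hfx₁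
          exact this
        have hWopen : IsOpen (Function.support f ∩ Set.univ.pi fun _ : Fin (n+1) => Set.Ioo (0:ℝ) 1) :=
          hU.inter (isOpen_set_pi Set.finite_univ fun _ _ => isOpen_Ioo)
        have hWpos : 0 < volume (Function.support f ∩ Set.univ.pi fun _ : Fin (n+1) => Set.Ioo (0:ℝ) 1) :=
          hWopen.measure_pos volume hW
        refine lt_of_lt_of_le hWpos (measure_mono ?_)
        refine Set.inter_subset_inter le_rfl ?_
        have : (Set.univ.pi fun _ : Fin (n+1) => Set.Ioo (0:ℝ) 1)
            ⊆ Set.univ.pi fun i : Fin (n+1) => Set.Icc (a i) (b i) := by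
          refine Set.pi_mono fun i _ => ?_
          simpa [ha, hb] using Set.Ioo_subset_Icc_self
        simpa [Set.pi_univ_Icc] using this
      -- conclude
      have hrne : ((∫ x in Set.Icc a b, ap x * wp x : ℝ) : ℂ) ≠ 0 := by
        exact_mod_cast hpos.ne'
      have hβ0 : β = 0 := by
        rcases mul_eq_zero.1 key with h' | h'
        · exact h'
        · exact absurd h' hrne
      have : Complex.I * α = 0 := by
        rw [hβ] at hβ0
        exact neg_eq_zero.mp hβ0
      exact (mul_eq_zero.1 this).resolve_left Complex.I_ne_zero
  refine ⟨hα, fun x => ?_, fun x => ?_⟩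
  · rw [hvx x, hα, mul_zero]
  · rw [hdiv x, hα]
    simp
end

section
/- (Kernel of the adjoint at zero) Let A⁰ = [[0, w_p⁻¹],[P_p, −i a_p]] on L²_# × L²_# with P_p = −div(G_p∇), and let (A⁰)* = [[0, P_p],[w_p⁻¹, i a_p]] be its adjoint. Set b_p = w_p a_p and b_h = ∫_𝕋 b_p > 0. Then Ψ₀ = (1/b_h)(b_p, i) satisfies (A⁰)*Ψ₀ = 0, and ⟨Φ₀, Ψ₀⟩ = 1 where Φ₀ = (1, 0). Moreover every element of ker((A⁰)*) is a scalar multiple of (b_p, i). -/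
open MeasureTheory

section Aux
open Set
private lemma fderiv_translate {E : Type*} [NormedAddCommGroup E] [NormedSpace ℝ E]
    {d : ℕ} (h : (Fin d → ℝ) → E) (hd : Differentiable ℝ h) (c : Fin d → ℝ)
    (hper : ∀ y, h (y + c) = h y) (x : Fin d → ℝ) :
    fderiv ℝ h (x + c) = fderiv ℝ h x := by
  have H : HasFDerivAt (fun y : Fin d → ℝ => h (y + c)) (fderiv ℝ h (x + c)) x := by
    have := HasFDerivAt.comp x (hd (x + c)).hasFDerivAt
      ((hasFDerivAt_id x).add_const c)
    exact this
  have he : (fun y : Fin d → ℝ => h (y + c)) = h := funext hper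
  rw [he] at H
  exact H.fderiv.symm

private lemma g_constant {d : ℕ}
    (Gp : (Fin d → ℝ) → Fin d → Fin d → ℝ) (Gmin : ℝ) (hGmin : 0 < Gmin)
    (hGper : ∀ (x : Fin d → ℝ) (n : Fin d → ℤ), Gp (x + fun i => (n i : ℝ)) = Gp x)
    (hGell : ∀ (x ξ : Fin d → ℝ),
      Gmin * (∑ i, ξ i ^ 2) ≤ ∑ i, ∑ j, Gp x i j * ξ i * ξ j)
    (hGsmooth : ContDiff ℝ 1 Gp)
    (g : (Fin d → ℝ) → ℂ)
    (hgper : ∀ (x : Fin d → ℝ) (n : Fin d → ℤ), g (x + fun i => (n i : ℝ)) = g x)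
    (hg : ContDiff ℝ 2 g)
    (hpde : ∀ x, (∑ j, fderiv ℝ
        (fun y => ∑ k, ((Gp y j k : ℝ) : ℂ) * fderiv ℝ g y (Pi.single k 1))
        x (Pi.single j 1)) = 0)
    (x y : Fin d → ℝ) : g x = g y := by
  have hgdiff : Differentiable ℝ g := hg.differentiable (by norm_num)
  suffices hconst : ∀ z, fderiv ℝ g z = 0 by
    exact is_const_of_fderiv_eq_zero hgdiff hconst x y
  rcases d with - | n
  · intro z
    haveI : Subsingleton ((Fin 0 → ℝ) →L[ℝ] ℂ) := by
      constructor
      intro a b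
      ext v
      have hv : v = 0 := funext fun i => i.elim0
      rw [hv, map_zero, map_zero]
    exact Subsingleton.elim _ _
  have hDg : ContDiff ℝ 1 (fderiv ℝ g) := hg.fderiv_right (by norm_num)
  set F : Fin (n+1) → (Fin (n+1) → ℝ) → ℂ :=
    fun j y => ∑ k, ((Gp y j k : ℝ) : ℂ) * fderiv ℝ g y (Pi.single k 1) with hFdef
  have hF : ∀ j, ContDiff ℝ 1 (F j) := by
    intro j
    rw [hFdef]
    apply ContDiff.sum
    intro k _
    exact ((Complex.ofRealCLM.contDiff).comp
        ((contDiff_pi.1 ((contDiff_pi.1 hGsmooth) j)) k)).mul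
      (hDg.clm_apply contDiff_const)
  set V : Fin (n+1) → (Fin (n+1) → ℝ) → ℂ :=
    fun j y => (starRingEnd ℂ) (g y) * F j y with hVdef
  have hconjg : ContDiff ℝ 1 fun y : Fin (n+1) → ℝ => (starRingEnd ℂ) (g y) :=
    Complex.conjCLE.toContinuousLinearMap.contDiff.comp (hg.of_le (by norm_num))
  have hV : ∀ j, ContDiff ℝ 1 (V j) := by
    intro j; rw [hVdef]; exact hconjg.mul (hF j)
  -- periodicity
  have hDgper : ∀ (z : Fin (n+1) → ℝ) (m : Fin (n+1) → ℤ),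
      fderiv ℝ g (z + fun i => (m i : ℝ)) = fderiv ℝ g z := fun z m =>
    fderiv_translate g hgdiff _ (fun w => hgper w m) z
  have hVper : ∀ j (z : Fin (n+1) → ℝ) (m : Fin (n+1) → ℤ),
      V j (z + fun i => (m i : ℝ)) = V j z := by
    intro j z m
    simp only [hVdef, hFdef, hgper z m, hGper z m, hDgper z m]
  -- divergence theorem on [0,1]^d
  set a : Fin (n+1) → ℝ := fun _ => 0 with hadef
  set b : Fin (n+1) → ℝ := fun _ => 1 with hbdef
  have hle : a ≤ b := fun i => by norm_num [hadef, hbdef]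
  have hVcont : ∀ j, Continuous (V j) := fun j => (hV j).continuous
  have hfdVcont : ∀ j, Continuous fun z => fderiv ℝ (V j) z :=
    fun j => (hV j).continuous_fderiv one_ne_zero
  have hdivcont : Continuous fun z => ∑ i, fderiv ℝ (V i) z (Pi.single i 1) := by
    apply continuous_finset_sum
    intro i _
    exact (hfdVcont i).clm_apply continuous_const
  have Hi : IntegrableOn (fun z => ∑ i, fderiv ℝ (V i) z (Pi.single i 1)) (Icc a b) :=
    hdivcont.continuousOn.integrableOn_compact isCompact_Icc
  have hdivthm := integral_divergence_of_hasFDerivAt_off_countable' a b hle V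
    (fun i z => fderiv ℝ (V i) z) ∅ countable_empty
    (fun i => (hVcont i).continuousOn)
    (fun z _ i => (((hV i).differentiable one_ne_zero) z).hasFDerivAt) Hi
  have hface : ∀ i : Fin (n+1),
      (fun w : Fin n → ℝ => V i (Fin.insertNth i (b i) w))
        = fun w => V i (Fin.insertNth i (a i) w) := by
    intro i; funext w
    have h1 : Fin.insertNth i (b i) w
        = Fin.insertNth i (a i) w + fun j => (((Pi.single i 1 : Fin (n+1) → ℤ)) j : ℝ) := by
      funext j
      refine Fin.succAboveCases i ?_ ?_ j
      · simp [hadef, hbdef]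
      · intro k
        simp [Pi.single_eq_of_ne (Fin.succAbove_ne i k)]
    rw [h1, hVper i _ _]
  have hzero : (∫ z in Icc a b, ∑ i, fderiv ℝ (V i) z (Pi.single i 1)) = 0 := by
    rw [hdivthm]
    apply Finset.sum_eq_zero
    intro i _
    rw [show (fun w : Fin n → ℝ => V i (Fin.insertNth i (b i) w))
        = fun w => V i (Fin.insertNth i (a i) w) from hface i]
    exact sub_self _
  -- pointwise divergence identity
  have hFd : ∀ i, Differentiable ℝ (F i) := fun i => (hF i).differentiable one_ne_zero
  have hgcd : Differentiable ℝ fun y : Fin (n+1) → ℝ => (starRingEnd ℂ) (g y) :=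
    hconjg.differentiable one_ne_zero
  have hconj_fderiv : ∀ (z v : Fin (n+1) → ℝ),
      fderiv ℝ (fun y => (starRingEnd ℂ) (g y)) z v = (starRingEnd ℂ) (fderiv ℝ g z v) := by
    intro z v
    have h1 : fderiv ℝ (⇑Complex.conjCLE ∘ g) z
        = (Complex.conjCLE : ℂ →L[ℝ] ℂ).comp (fderiv ℝ g z) :=
      Complex.conjCLE.comp_fderiv
    have h2 := congrArg (fun L : (Fin (n+1) → ℝ) →L[ℝ] ℂ => L v) h1
    rw [show (fun y => (starRingEnd ℂ) (g y)) = ⇑Complex.conjCLE ∘ g from rfl, h1]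
    rfl
  have hdiveq : ∀ z, ∑ i, fderiv ℝ (V i) z (Pi.single i 1)
      = ∑ i, (starRingEnd ℂ) (fderiv ℝ g z (Pi.single i 1)) * F i z := by
    intro z
    have hterm : ∀ i, fderiv ℝ (V i) z (Pi.single i 1)
        = (starRingEnd ℂ) (g z) * fderiv ℝ (F i) z (Pi.single i 1)
          + (starRingEnd ℂ) (fderiv ℝ g z (Pi.single i 1)) * F i z := by
      intro i
      have hm : fderiv ℝ (V i) z
          = (starRingEnd ℂ) (g z) • fderiv ℝ (F i) z
            + F i z • fderiv ℝ (fun y => (starRingEnd ℂ) (g y)) z := by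
        simp only [hVdef]
        exact fderiv_mul (hgcd z) (hFd i z)
      have h3 := congrArg (fun L : (Fin (n+1) → ℝ) →L[ℝ] ℂ => L (Pi.single i 1)) hm
      simp only [ContinuousLinearMap.add_apply, ContinuousLinearMap.coe_smul',
        Pi.smul_apply, smul_eq_mul] at h3
      rw [h3, hconj_fderiv]
      ring
    rw [Finset.sum_congr rfl fun i _ => hterm i, Finset.sum_add_distrib, ← Finset.mul_sum]
    have h0 : ∑ i, fderiv ℝ (F i) z (Pi.single i 1) = 0 := by
      simp only [hFdef]; exact hpde z
    rw [h0, mul_zero, zero_add]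
  -- integral of Q vanishes
  have hQcont : Continuous fun z =>
      ∑ i, (starRingEnd ℂ) (fderiv ℝ g z (Pi.single i 1)) * F i z := by
    apply continuous_finset_sum
    intro i _
    have hc1 : Continuous fun z : Fin (n+1) → ℝ =>
        (starRingEnd ℂ) (fderiv ℝ g z (Pi.single i 1)) := by
      simp only [starRingEnd_apply]
      exact (hDg.continuous.clm_apply continuous_const).star
    exact hc1.mul (hF i).continuous
  have hQI : (∫ z in Icc a b,
      ∑ i, (starRingEnd ℂ) (fderiv ℝ g z (Pi.single i 1)) * F i z) = 0 := by
    rw [show (fun z => ∑ i, (starRingEnd ℂ) (fderiv ℝ g z (Pi.single i 1)) * F i z)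
        = fun z => ∑ i, fderiv ℝ (V i) z (Pi.single i 1) from (funext hdiveq).symm]
    exact hzero
  have hQint : IntegrableOn
      (fun z => ∑ i, (starRingEnd ℂ) (fderiv ℝ g z (Pi.single i 1)) * F i z) (Icc a b) :=
    hQcont.continuousOn.integrableOn_compact isCompact_Icc
  have hre0 : (∫ z in Icc a b,
      (∑ i, (starRingEnd ℂ) (fderiv ℝ g z (Pi.single i 1)) * F i z).re) = 0 := by
    have h := integral_re hQint
    simp only [RCLike.re_to_complex] at h
    rw [h, hQI]
    simp
  -- pointwise lower bound
  have hlow : ∀ z, Gmin * ((∑ i, (fderiv ℝ g z (Pi.single i 1)).re ^ 2)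
      + ∑ i, (fderiv ℝ g z (Pi.single i 1)).im ^ 2)
      ≤ (∑ i, (starRingEnd ℂ) (fderiv ℝ g z (Pi.single i 1)) * F i z).re := by
    intro z
    have hexp : (∑ i, (starRingEnd ℂ) (fderiv ℝ g z (Pi.single i 1)) * F i z).re
        = (∑ i, ∑ k, Gp z i k * (fderiv ℝ g z (Pi.single i 1)).re
              * (fderiv ℝ g z (Pi.single k 1)).re)
          + ∑ i, ∑ k, Gp z i k * (fderiv ℝ g z (Pi.single i 1)).im
              * (fderiv ℝ g z (Pi.single k 1)).im := by
      rw [Complex.re_sum, ← Finset.sum_add_distrib]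
      refine Finset.sum_congr rfl fun i _ => ?_
      simp only [hFdef]
      rw [Finset.mul_sum, Complex.re_sum, ← Finset.sum_add_distrib]
      refine Finset.sum_congr rfl fun k _ => ?_
      simp [Complex.mul_re, Complex.mul_im]
      ring
    rw [hexp, mul_add]
    have h1 := hGell z fun i => (fderiv ℝ g z (Pi.single i 1)).re
    have h2 := hGell z fun i => (fderiv ℝ g z (Pi.single i 1)).im
    exact add_le_add h1 h2
  have hnn : ∀ z, 0 ≤ (∑ i, (starRingEnd ℂ) (fderiv ℝ g z (Pi.single i 1)) * F i z).re := by
    intro z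
    refine le_trans ?_ (hlow z)
    have : 0 ≤ (∑ i, (fderiv ℝ g z (Pi.single i 1)).re ^ 2)
        + ∑ i, (fderiv ℝ g z (Pi.single i 1)).im ^ 2 := by positivity
    positivity
  -- Q.re is continuous and vanishes on the closed box
  have hreC : Continuous fun z =>
      (∑ i, (starRingEnd ℂ) (fderiv ℝ g z (Pi.single i 1)) * F i z).re :=
    Complex.continuous_re.comp hQcont
  have hopen0 : ∀ z ∈ pi univ fun _ : Fin (n+1) => Ioo (0:ℝ) 1,
      (∑ i, (starRingEnd ℂ) (fderiv ℝ g z (Pi.single i 1)) * F i z).re = 0 := by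
    intro z hz
    by_contra hne
    have hpos : 0 < (∑ i, (starRingEnd ℂ) (fderiv ℝ g z (Pi.single i 1)) * F i z).re :=
      lt_of_le_of_ne (hnn z) (Ne.symm hne)
    set U : Set (Fin (n+1) → ℝ) :=
      ((fun w => (∑ i, (starRingEnd ℂ) (fderiv ℝ g w (Pi.single i 1)) * F i w).re) ⁻¹' Ioi 0)
        ∩ pi univ fun _ : Fin (n+1) => Ioo (0:ℝ) 1 with hUdef
    have hU : IsOpen U :=
      (isOpen_Ioi.preimage hreC).inter (isOpen_set_pi finite_univ fun _ _ => isOpen_Ioo)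
    have hμ : 0 < volume U := hU.measure_pos volume ⟨z, ⟨hpos, hz⟩⟩
    have hsub : U ⊆ (Function.support fun w =>
        (∑ i, (starRingEnd ℂ) (fderiv ℝ g w (Pi.single i 1)) * F i w).re) ∩ Icc a b := by
      rintro w ⟨hw1, hw2⟩
      refine ⟨ne_of_gt hw1, ?_, ?_⟩
      · intro i; exact (hw2 i (mem_univ i)).1.le
      · intro i; exact (hw2 i (mem_univ i)).2.le
    have hid : IntegrableOn (fun w =>
        (∑ i, (starRingEnd ℂ) (fderiv ℝ g w (Pi.single i 1)) * F i w).re) (Icc a b) :=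
      hreC.continuousOn.integrableOn_compact isCompact_Icc
    have hppos := (setIntegral_pos_iff_support_of_nonneg_ae
      (ae_of_all _ fun w => hnn w) hid).2 (lt_of_lt_of_le hμ (measure_mono hsub))
    rw [hre0] at hppos
    exact lt_irrefl 0 hppos
  have hIcc0 : ∀ z ∈ Icc a b,
      (∑ i, (starRingEnd ℂ) (fderiv ℝ g z (Pi.single i 1)) * F i z).re = 0 := by
    have hcl : Icc a b ⊆ closure (pi univ fun _ : Fin (n+1) => Ioo (0:ℝ) 1) := by
      rw [closure_pi_set]
      intro w hw i _
      rw [closure_Ioo (zero_ne_one)]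
      exact ⟨hw.1 i, hw.2 i⟩
    intro z hz
    have heq : Set.EqOn (fun w =>
        (∑ i, (starRingEnd ℂ) (fderiv ℝ g w (Pi.single i 1)) * F i w).re)
        (fun _ => (0:ℝ)) (closure (pi univ fun _ : Fin (n+1) => Ioo (0:ℝ) 1)) :=
      Set.EqOn.closure (fun w hw => hopen0 w hw) hreC continuous_const
    exact heq (hcl hz)
  -- conclude
  intro z
  set w : Fin (n+1) → ℝ := fun i => Int.fract (z i) with hwdef
  have hwIcc : w ∈ Icc a b := by
    constructor
    · intro i; exact Int.fract_nonneg _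
    · intro i; exact (Int.fract_lt_one _).le
  have hzw : z = w + fun i => ((⌊z i⌋ : ℤ) : ℝ) := by
    funext i
    simp only [hwdef, Pi.add_apply, Int.fract]
    ring
  have hre0w := hIcc0 w hwIcc
  have hsum : (∑ i, (fderiv ℝ g w (Pi.single i 1)).re ^ 2)
      + ∑ i, (fderiv ℝ g w (Pi.single i 1)).im ^ 2 ≤ 0 := by
    nlinarith [hlow w]
  have hS1 : ∀ i, (fderiv ℝ g w (Pi.single i 1)).re ^ 2 = 0 ∧
      (fderiv ℝ g w (Pi.single i 1)).im ^ 2 = 0 := by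
    have h1 : (∑ i, (fderiv ℝ g w (Pi.single i 1)).re ^ 2) = 0 := by
      have := Finset.sum_nonneg fun i (_ : i ∈ Finset.univ) =>
        sq_nonneg (fderiv ℝ g w (Pi.single i 1)).im
      have := Finset.sum_nonneg fun i (_ : i ∈ Finset.univ) =>
        sq_nonneg (fderiv ℝ g w (Pi.single i 1)).re
      linarith
    have h2 : (∑ i, (fderiv ℝ g w (Pi.single i 1)).im ^ 2) = 0 := by
      have := Finset.sum_nonneg fun i (_ : i ∈ Finset.univ) =>
        sq_nonneg (fderiv ℝ g w (Pi.single i 1)).im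
      have := Finset.sum_nonneg fun i (_ : i ∈ Finset.univ) =>
        sq_nonneg (fderiv ℝ g w (Pi.single i 1)).re
      linarith
    intro i
    exact ⟨(Finset.sum_eq_zero_iff_of_nonneg fun j _ => sq_nonneg _).1 h1 i (Finset.mem_univ i),
      (Finset.sum_eq_zero_iff_of_nonneg fun j _ => sq_nonneg _).1 h2 i (Finset.mem_univ i)⟩
  have hzero_i : ∀ i, fderiv ℝ g w (Pi.single i 1) = 0 := by
    intro i
    have h := hS1 i
    apply Complex.ext
    · simpa using pow_eq_zero_iff (n := 2) (by norm_num) |>.1 h.1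
    · simpa using pow_eq_zero_iff (n := 2) (by norm_num) |>.1 h.2
  have hfz : fderiv ℝ g z = fderiv ℝ g w := by
    conv_lhs => rw [hzw]
    exact hDgper w _
  ext v
  rw [hfz]
  have hv : v = ∑ i, v i • (Pi.single i 1 : Fin (n+1) → ℝ) := by
    funext j
    rw [Finset.sum_apply]
    simp [Pi.single_apply]
  conv_lhs => rw [hv]
  rw [map_sum]
  simp [hzero_i]
end Aux

/-- Kernel of the adjoint at zero. For `A⁰ = [[0, w_p⁻¹],[P_p, -i a_p]]` with adjoint
`(A⁰)* = [[0, P_p],[w_p⁻¹, i a_p]]` on periodic functions, set `b_p = w_p a_p` and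
`b_h = ∫_𝕋 b_p > 0`.  Then `Ψ₀ = (1/b_h)(b_p, i)` satisfies `(A⁰)*Ψ₀ = 0`,
`⟨Φ₀, Ψ₀⟩ = 1` for `Φ₀ = (1,0)`, and every `(f,g)` in the kernel of `(A⁰)*`
(i.e. `P_p g = 0` and `w_p⁻¹ f + i a_p g = 0`) is a scalar multiple of `(b_p, i)`. -/
theorem stmt16 (d : ℕ)
    (Gp : (Fin d → ℝ) → Fin d → Fin d → ℝ) (wp ap : (Fin d → ℝ) → ℝ)
    (Gmin wmin : ℝ) (hGmin : 0 < Gmin) (hwmin : 0 < wmin)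
    (hGper : ∀ (x : Fin d → ℝ) (n : Fin d → ℤ), Gp (x + fun i => (n i : ℝ)) = Gp x)
    (hwper : ∀ (x : Fin d → ℝ) (n : Fin d → ℤ), wp (x + fun i => (n i : ℝ)) = wp x)
    (haper : ∀ (x : Fin d → ℝ) (n : Fin d → ℤ), ap (x + fun i => (n i : ℝ)) = ap x)
    (hGsym : ∀ x i j, Gp x i j = Gp x j i)
    (hGell : ∀ (x ξ : Fin d → ℝ),
      Gmin * (∑ i, ξ i ^ 2) ≤ ∑ i, ∑ j, Gp x i j * ξ i * ξ j)
    (hGsmooth : ContDiff ℝ 1 Gp)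
    (hw : ∀ x, wmin ≤ wp x) (hwC : Continuous wp)
    (ha0 : ∀ x, 0 ≤ ap x) (haC : Continuous ap) (hane : ∃ x, ap x ≠ 0)
    (bh : ℝ)
    (hbh : bh = ∫ x in Set.univ.pi fun _ : Fin d => Set.Ioc (-(1/2) : ℝ) (1/2),
      wp x * ap x)
    (hbhpos : 0 < bh) :
    -- (A⁰)*Ψ₀ = 0 for Ψ₀ = (1/b_h)(b_p, i):
    ((∀ x : Fin d → ℝ,
        (∑ j, fderiv ℝ
          (fun y => ∑ k, ((Gp y j k : ℝ) : ℂ) *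
            fderiv ℝ (fun _ : Fin d → ℝ => Complex.I / (bh : ℂ)) y (Pi.single k 1))
          x (Pi.single j 1)) = 0) ∧
      (∀ x : Fin d → ℝ,
        ((wp x : ℝ) : ℂ)⁻¹ * (((wp x * ap x : ℝ) : ℂ) / (bh : ℂ))
          + Complex.I * ((ap x : ℝ) : ℂ) * (Complex.I / (bh : ℂ)) = 0)) ∧
    -- ⟨Φ₀, Ψ₀⟩ = 1:
    ((∫ x in Set.univ.pi fun _ : Fin d => Set.Ioc (-(1/2) : ℝ) (1/2),
        (1 : ℂ) * (starRingEnd ℂ) (((wp x * ap x : ℝ) : ℂ) / (bh : ℂ))) = 1) ∧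
    -- every element of ker (A⁰)* is a scalar multiple of (b_p, i):
    (∀ f g : (Fin d → ℝ) → ℂ,
      (∀ (x : Fin d → ℝ) (n : Fin d → ℤ), f (x + fun i => (n i : ℝ)) = f x) →
      (∀ (x : Fin d → ℝ) (n : Fin d → ℤ), g (x + fun i => (n i : ℝ)) = g x) →
      Continuous f → ContDiff ℝ 2 g →
      (∀ x, (∑ j, fderiv ℝ
          (fun y => ∑ k, ((Gp y j k : ℝ) : ℂ) * fderiv ℝ g y (Pi.single k 1))
          x (Pi.single j 1)) = 0) →
      (∀ x, ((wp x : ℝ) : ℂ)⁻¹ * f x + Complex.I * ((ap x : ℝ) : ℂ) * g x = 0) →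
      ∃ c : ℂ, (∀ x, f x = c * ((wp x * ap x : ℝ) : ℂ)) ∧ (∀ x, g x = c * Complex.I)) := by
  have hb' : ((bh : ℝ) : ℂ) ≠ 0 := Complex.ofReal_ne_zero.2 hbhpos.ne'
  refine ⟨⟨?_, ?_⟩, ?_, ?_⟩
  · -- P_p applied to the constant i / b_h is zero
    intro x
    have h : ∀ j : Fin d, (fun y : Fin d → ℝ => ∑ k, ((Gp y j k : ℝ) : ℂ) *
        fderiv ℝ (fun _ : Fin d → ℝ => Complex.I / (bh : ℂ)) y (Pi.single k 1))
        = fun _ => 0 := by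
      intro j; funext y; simp [fderiv_const]
    simp only [h, fderiv_const]
    simp
  · -- second component of (A⁰)*Ψ₀ vanishes
    intro x
    have hw' : ((wp x : ℝ) : ℂ) ≠ 0 :=
      Complex.ofReal_ne_zero.2 (ne_of_gt (lt_of_lt_of_le hwmin (hw x)))
    push_cast
    field_simp
    ring_nf
    rw [Complex.I_sq]
    ring
  · -- normalization ⟨Φ₀, Ψ₀⟩ = 1
    simp only [one_mul, map_div₀, Complex.conj_ofReal]
    rw [integral_div]
    rw [show (∫ (x : Fin d → ℝ) in Set.univ.pi fun _ : Fin d => Set.Ioc (-(1/2):ℝ) (1/2),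
          ((wp x * ap x : ℝ) : ℂ))
        = ((∫ (x : Fin d → ℝ) in Set.univ.pi fun _ : Fin d => Set.Ioc (-(1/2):ℝ) (1/2),
          wp x * ap x : ℝ) : ℂ) from integral_ofReal, ← hbh, div_self hb']
  · -- kernel description
    intro f g hfper hgper hfC hgC hker hrel
    have hgconst : ∀ x : Fin d → ℝ, g x = g 0 := fun x =>
      g_constant Gp Gmin hGmin hGper hGell hGsmooth g hgper hgC hker x 0
    refine ⟨-Complex.I * g 0, ?_, ?_⟩
    · intro x
      have hw' : ((wp x : ℝ) : ℂ) ≠ 0 :=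
        Complex.ofReal_ne_zero.2 (ne_of_gt (lt_of_lt_of_le hwmin (hw x)))
      have h := hrel x
      rw [hgconst x] at h
      push_cast
      field_simp at h
      linear_combination h
    · intro x
      rw [hgconst x]
      linear_combination (g 0) * Complex.I_mul_I
end
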